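/- Let H, K be closed subspaces of L², a ∈ 𝒢L∞ with aK = H, φ ∈ L∞, ψ = |a|⁻²·φ, and F = T_a^{K,H} = M_a|_K. Then T_φ^K = F* ∘ T_ψ^H ∘ F. Moreover, this is a unitary equivalence (i.e., F* = F⁻¹, so that M_a|_K : K → H is an isometric isomorphism) if and only if T_{1 − |a|²}^K = 0, or equivalently T_{ā − a⁻¹}^{H,K} = 0. -/

import Mathlib

open MeasureTheory

noncomputable section

/-! ## Setup: the circle, L², L∞, multiplication operators, Hardy space,
model spaces, and generalized Toeplitz operators -/

instance : Fact (0 < 2 * Real.pi) := ⟨by positivity⟩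

/-- The normalized Lebesgue (Haar) measure `dθ/2π` on the circle. -/
abbrev μH : Measure (AddCircle (2 * Real.pi)) := AddCircle.haarAddCircle

/-- The Lebesgue space `L²` of the circle. -/
abbrev L2 : Type := Lp ℂ 2 μH

/-- The space `L∞` of essentially bounded functions on the circle. -/
abbrev Linf : Type := Lp ℂ ⊤ μH

/-- Pointwise (a.e.) multiplication on `L∞`. -/
instance : Mul Linf :=
  ⟨fun f g => ((Lp.memLp g).smul (r := ⊤) (Lp.memLp f)).toLp (⇑f • ⇑g)⟩

/-- The constant function `1` as an element of `L∞`. -/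
instance : One Linf := ⟨(memLp_const (1 : ℂ)).toLp (fun _ => (1 : ℂ))⟩

/-- Complex conjugation on `L∞`. -/
instance : Star Linf :=
  ⟨fun f => ((Complex.conjCLE.toContinuousLinearMap).comp_memLp' (Lp.memLp f)).toLp
    ((starRingEnd ℂ) ∘ ⇑f)⟩

/-- Multiplication of an `L²` function by an `L∞` function. -/
def mulFun (φ : Linf) (f : L2) : L2 :=
  ((Lp.memLp f).smul (r := 2) (Lp.memLp φ)).toLp (⇑φ • ⇑f)

lemma mulFun_coe (φ : Linf) (f : L2) : mulFun φ f =ᵐ[μH] ⇑φ • ⇑f :=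
  MemLp.coeFn_toLp _

lemma mulFun_norm_le (φ : Linf) (f : L2) : ‖mulFun φ f‖ ≤ ‖φ‖ * ‖f‖ := by
  rw [mulFun, Lp.norm_toLp, Lp.norm_def, Lp.norm_def, ← ENNReal.toReal_mul]
  refine ENNReal.toReal_mono ?_ ?_
  · exact ENNReal.mul_ne_top (Lp.eLpNorm_ne_top φ) (Lp.eLpNorm_ne_top f)
  · exact eLpNorm_smul_le_eLpNorm_top_mul_eLpNorm 2 (Lp.aestronglyMeasurable f) ⇑φ

/-- The bounded multiplication operator `M_φ : L² → L²` for `φ ∈ L∞`. -/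
def mulCLM (φ : Linf) : L2 →L[ℂ] L2 :=
  LinearMap.mkContinuous
    { toFun := mulFun φ
      map_add' := by
        intro f g
        apply Lp.ext
        filter_upwards [mulFun_coe φ (f + g), mulFun_coe φ f, mulFun_coe φ g,
          Lp.coeFn_add f g, Lp.coeFn_add (mulFun φ f) (mulFun φ g)] with x h1 h2 h3 h4 h5
        simp only [Pi.smul_apply', Pi.add_apply] at *
        rw [h1, h5, h2, h3, h4]
        exact smul_add _ _ _
      map_smul' := by
        intro c f
        apply Lp.ext
        filter_upwards [mulFun_coe φ (c • f), mulFun_coe φ f,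
          Lp.coeFn_smul c f, Lp.coeFn_smul c (mulFun φ f)] with x h1 h2 h3 h4
        simp only [Pi.smul_apply', Pi.smul_apply, RingHom.id_apply] at *
        rw [h1, h4, h2, h3]
        exact smul_comm _ _ _ }
    ‖φ‖ (mulFun_norm_le φ)

/-- The image `a·K = {a f : f ∈ K}` of a subspace `K ⊆ L²` under multiplication by `a ∈ L∞`. -/
def smulSub (a : Linf) (K : Submodule ℂ L2) : Submodule ℂ L2 :=
  K.map (mulCLM a : L2 →ₗ[ℂ] L2)

/-- The Hardy space `H² = {f ∈ L² : f̂(n) = 0 for n < 0}`. -/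
def Hardy : Submodule ℂ L2 where
  carrier := {f | ∀ n : ℤ, n < 0 → fourierBasis.repr f n = 0}
  add_mem' := by
    intro f g hf hg n hn
    rw [map_add, lp.coeFn_add, Pi.add_apply, hf n hn, hg n hn, add_zero]
  zero_mem' := by
    intro n hn
    rw [map_zero, lp.coeFn_zero]
    rfl
  smul_mem' := by
    intro c f hf n hn
    rw [_root_.map_smul, lp.coeFn_smul, Pi.smul_apply, hf n hn, smul_zero]

lemma hardy_isClosed : IsClosed (Hardy : Set L2) := by
  have h : (Hardy : Set L2) =
      ⋂ n : {m : ℤ // m < 0}, {f : L2 | fourierBasis.repr f n.1 = 0} := by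
    ext f
    constructor
    · intro hf
      exact Set.mem_iInter.2 fun n => hf n.1 n.2
    · intro hf n hn
      exact Set.mem_iInter.1 hf ⟨n, hn⟩
  rw [h]
  refine isClosed_iInter fun n => isClosed_eq ?_ continuous_const
  have : (fun f : L2 => fourierBasis.repr f n.1) =
      fun f : L2 => (innerSL ℂ (fourierBasis n.1)) f := by
    funext f
    exact fourierBasis.repr_apply_apply f n.1
  rw [this]
  exact (innerSL ℂ (fourierBasis n.1)).continuous

instance : CompleteSpace Hardy := hardy_isClosed.completeSpace_coe

/-- The model space `K_θ = H² ⊖ θH² = H² ∩ (θH²)^⊥`. -/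
def modelSpace (θ : Linf) : Submodule ℂ L2 :=
  Hardy ⊓ (smulSub θ Hardy)ᗮ

instance (θ : Linf) : CompleteSpace (modelSpace θ) := by
  refine IsClosed.completeSpace_coe (hs := ?_)
  have h : (modelSpace θ : Set L2) = (Hardy : Set L2) ∩ ((smulSub θ Hardy)ᗮ : Set L2) := rfl
  rw [h]
  exact hardy_isClosed.inter (smulSub θ Hardy).isClosed_orthogonal

/-- The generalized Toeplitz operator `T_φ^{H₁,H₂} = P_{H₂} M_φ |_{H₁}`. -/
def genToeplitz (φ : Linf) (H₁ H₂ : Submodule ℂ L2) [CompleteSpace H₂] : H₁ →L[ℂ] H₂ :=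
  H₂.orthogonalProjectionOnto.comp ((mulCLM φ).comp H₁.subtypeL)

/-- The orthogonal projection of `L²` onto `H`, viewed as an operator `L² → L²`. -/
def projL (H : Submodule ℂ L2) [CompleteSpace H] : L2 →L[ℂ] L2 :=
  H.subtypeL.comp H.orthogonalProjectionOnto

/-- `φ ∈ H∞`: all negative Fourier coefficients of `φ` vanish. -/
def IsHardyInf (φ : Linf) : Prop := ∀ n : ℤ, n < 0 → fourierCoeff (⇑φ) n = 0

/-- `θ` is an inner function: `θ ∈ H∞` and `|θ| = 1` a.e. on the circle. -/
def IsInner (θ : Linf) : Prop :=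
  IsHardyInf θ ∧ ∀ᵐ x ∂μH, ‖(θ : AddCircle (2 * Real.pi) → ℂ) x‖ = 1

/-- `a ∈ 𝒢H∞` with explicit inverse `b ∈ H∞`. -/
def GHinfPair (a b : Linf) : Prop := IsHardyInf a ∧ IsHardyInf b ∧ a * b = 1

/-- `a ∈ 𝒢H∞`: `a` is invertible in the algebra `H∞`. -/
def IsGHinf (a : Linf) : Prop := ∃ b, GHinfPair a b

/-- `b ∈ 𝒢H̄∞`: `b` is the conjugate of an element of `𝒢H∞`. -/
def IsGHinfBar (b : Linf) : Prop := ∃ c, IsGHinf c ∧ b = star c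

/-- `a ∈ 𝒢L∞` with explicit inverse `b`. -/
def GLinfPair (a b : Linf) : Prop := a * b = 1 ∧ b * a = 1

/-- `a ∈ 𝒢L∞`: `a` is invertible in the algebra `L∞`. -/
def IsGLinf (a : Linf) : Prop := ∃ b, GLinfPair a b

/-- The kernel of an operator between subspaces of `L²`, viewed as a subspace of `L²`. -/
def subKer {K₁ K₂ : Submodule ℂ L2} (T : K₁ →L[ℂ] K₂) : Submodule ℂ L2 :=
  (LinearMap.ker (T : K₁ →ₗ[ℂ] K₂)).map K₁.subtype

/-- The range of an operator between subspaces of `L²`, viewed as a subspace of `L²`. -/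
def subRan {K₁ K₂ : Submodule ℂ L2} (T : K₁ →L[ℂ] K₂) : Submodule ℂ L2 :=
  (LinearMap.range (T : K₁ →ₗ[ℂ] K₂)).map K₂.subtype

/-- The image of a subspace `S ⊆ K₁` under `T : K₁ → K₂`, viewed as a subspace of `L²`. -/
def opImage {K₁ K₂ : Submodule ℂ L2} (T : K₁ →L[ℂ] K₂) (S : Submodule ℂ K₁) :
    Submodule ℂ L2 :=
  (S.map (T : K₁ →ₗ[ℂ] K₂)).map K₂.subtype

section Antilinear

variable {E : Type*} [NormedAddCommGroup E] [InnerProductSpace ℂ E]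

/-- `C` is antilinear: `C(f + a g) = C f + ā C g`. -/
def IsAntilinearMap (C : E → E) : Prop :=
  ∀ (f g : E) (a : ℂ), C (f + a • g) = C f + (starRingEnd ℂ a) • C g

/-- `Cs` is the antilinear adjoint of `C`: `⟨C f, g⟩ = conj ⟨f, Cs g⟩`. -/
def IsAntilinearAdjointOf (C Cs : E → E) : Prop :=
  ∀ f g : E, (inner ℂ (C f) g : ℂ) = (starRingEnd ℂ) (inner ℂ f (Cs g) : ℂ)

/-- `C` is an antilinear unitary: it is antilinear and its antilinear adjoint is its inverse. -/
def IsAntilinearUnitary (C : E → E) : Prop :=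
  IsAntilinearMap C ∧ ∃ Cs : E → E, IsAntilinearAdjointOf C Cs ∧
    Function.LeftInverse Cs C ∧ Function.RightInverse Cs C

/-- `T` is complex selfadjoint with respect to `C` (with inverse `Cinv`): `C T C⁻¹ = T*`. -/
def IsComplexSelfadjointWith [CompleteSpace E] (T : E →L[ℂ] E) (C Cinv : E → E) : Prop :=
  ∀ f : E, C (T (Cinv f)) = ContinuousLinearMap.adjoint T f

end Antilinear


/-! ## Auxiliary lemmas for Statement 9 -/

section Aux

local notation "⟪" x ", " y "⟫" => @inner ℂ _ _ x y

lemma Linf.mul_coe (a b : Linf) : ⇑(a * b) =ᵐ[μH] fun x => a x * b x :=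
  MemLp.coeFn_toLp _

lemma Linf.one_coe : ⇑(1 : Linf) =ᵐ[μH] fun _ => (1 : ℂ) :=
  MemLp.coeFn_toLp _

lemma Linf.star_coe (a : Linf) : ⇑(star a) =ᵐ[μH] fun x => (starRingEnd ℂ) (a x) :=
  MemLp.coeFn_toLp _

lemma mulCLM_coe (a : Linf) (f : L2) : ⇑(mulCLM a f) =ᵐ[μH] fun x => a x * f x :=
  mulFun_coe a f

lemma L2_inner_eq (f g : L2) : ⟪f, g⟫ = ∫ x, (starRingEnd ℂ) (f x) * g x ∂μH := by
  rw [MeasureTheory.L2.inner_def]; congr 1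
  funext x
  exact RCLike.inner_apply' _ _

/-- The a.e. statement of `a * b = 1` in `L∞`. -/
lemma GLinf_ae {a b : Linf} (h : a * b = 1) : ∀ᵐ x ∂μH, a x * b x = 1 := by
  have h1 : ⇑(a * b) =ᵐ[μH] ⇑(1 : Linf) := by rw [h]
  filter_upwards [Linf.mul_coe a b, Linf.one_coe, h1] with x hx hy hz
  rw [← hx, hz, hy]

lemma mem_of_smulSub {a : Linf} {K H : Submodule ℂ L2} (haK : smulSub a K = H)
    (f : K) : mulCLM a (f : L2) ∈ H := by
  rw [← haK]
  exact ⟨(f : L2), f.2, rfl⟩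

lemma genToeplitz_coe_of_mem {a : Linf} {K H : Submodule ℂ L2} [CompleteSpace H]
    (haK : smulSub a K = H) (f : K) :
    ((genToeplitz a K H f : H) : L2) = mulCLM a (f : L2) := by
  have hm := mem_of_smulSub haK f
  show ((H.orthogonalProjectionOnto (mulCLM a (f : L2)) : H) : L2) = _
  rw [show mulCLM a (f : L2) = ((⟨mulCLM a (f : L2), hm⟩ : H) : L2) from rfl,
    Submodule.orthogonalProjectionOnto_mem_subspace_eq_self]

lemma genToeplitz_surj {a : Linf} {K H : Submodule ℂ L2} [CompleteSpace H]
    (haK : smulSub a K = H) (h : H) : ∃ f : K, genToeplitz a K H f = h := by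
  have : (h : L2) ∈ smulSub a K := by rw [haK]; exact h.2
  obtain ⟨x, hxK, hx⟩ := this
  refine ⟨⟨x, hxK⟩, ?_⟩
  apply Subtype.ext
  rw [genToeplitz_coe_of_mem haK]
  exact hx

lemma inner_genToeplitz_left {φ : Linf} {K₁ K₂ : Submodule ℂ L2} [CompleteSpace K₂]
    (f : K₁) (g : K₂) :
    (inner ℂ (genToeplitz φ K₁ K₂ f) g : ℂ) = ⟪mulCLM φ (f : L2), (g : L2)⟫ := by
  have h : genToeplitz φ K₁ K₂ f = K₂.orthogonalProjectionOnto (mulCLM φ (f : L2)) := rfl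
  rw [h]
  exact Submodule.inner_orthogonalProjectionOnto_eq_of_mem_right (K := K₂) g (mulCLM φ (f : L2))

end Aux

set_option maxHeartbeats 1000000 in
/-- Corollary 2.18: with `aK = H`, `ψ = |a|⁻² φ` and
`F = T_a^{K,H} = M_a|_K`, one has `T_φ^K = F* T_ψ^H F`, and this is a unitary
equivalence (`F* = F⁻¹`) iff `T_{1 − |a|²}^K = 0`, equivalently
`T_{ā − a⁻¹}^{H,K} = 0`. -/
theorem statement9 (H K : Submodule ℂ L2) [CompleteSpace H] [CompleteSpace K]
    (a b : Linf) (hab : GLinfPair a b) (haK : smulSub a K = H) (φ ψ : Linf)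
    (hψ : ψ = (star b * b) * φ) :
    genToeplitz φ K K =
      (ContinuousLinearMap.adjoint (genToeplitz a K H)).comp
        ((genToeplitz ψ H H).comp (genToeplitz a K H)) ∧
    (((ContinuousLinearMap.adjoint (genToeplitz a K H)).comp (genToeplitz a K H) =
        ContinuousLinearMap.id ℂ K ∧
      (genToeplitz a K H).comp (ContinuousLinearMap.adjoint (genToeplitz a K H)) =
        ContinuousLinearMap.id ℂ H) ↔
      genToeplitz (1 - star a * a) K K = 0) ∧
    (genToeplitz (1 - star a * a) K K = 0 ↔ genToeplitz (star a - b) H K = 0) := by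
  obtain ⟨hab1, hba1⟩ := hab
  have hab' : ∀ᵐ x ∂μH, a x * b x = 1 := GLinf_ae hab1
  have hba' : ∀ᵐ x ∂μH, b x * a x = 1 := GLinf_ae hba1
  set F := genToeplitz a K H with hF
  have hFcoe : ∀ f : K, ((F f : H) : L2) = mulCLM a (f : L2) :=
    fun f => genToeplitz_coe_of_mem haK f
  -- ψ a.e. description
  have hψae : ∀ᵐ x ∂μH, ψ x = (starRingEnd ℂ) (b x) * b x * φ x := by
    rw [hψ]
    filter_upwards [Linf.mul_coe (star b * b) φ, Linf.mul_coe (star b) b,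
      Linf.star_coe b] with x h1 h2 h3
    rw [h1, h2, h3]
  -- Part 1
  have part1 : genToeplitz φ K K =
      (ContinuousLinearMap.adjoint F).comp ((genToeplitz ψ H H).comp F) := by
    refine ContinuousLinearMap.ext fun f => ?_
    apply ext_inner_right ℂ
    intro g
    rw [ContinuousLinearMap.comp_apply, ContinuousLinearMap.comp_apply,
      ContinuousLinearMap.adjoint_inner_left, inner_genToeplitz_left,
      inner_genToeplitz_left, hFcoe, hFcoe, L2_inner_eq,
      L2_inner_eq]
    refine integral_congr_ae ?_
    filter_upwards [mulCLM_coe φ (f : L2), mulCLM_coe ψ (mulCLM a (f : L2)),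
      mulCLM_coe a (f : L2), mulCLM_coe a (g : L2), hψae, hab'] with x h1 h2 h3 h4 h5 h6
    rw [h1, h2, h3, h4, h5]
    have h6c : (starRingEnd ℂ) (a x) * (starRingEnd ℂ) (b x) = 1 := by
      rw [← map_mul, h6, map_one]
    simp only [map_mul, Complex.conj_conj]
    linear_combination (-((starRingEnd ℂ) (φ x) * (starRingEnd ℂ) ((f : L2) x) * (g : L2) x *
        (starRingEnd ℂ) (a x) * (starRingEnd ℂ) (b x))) * h6 -
      ((starRingEnd ℂ) (φ x) * (starRingEnd ℂ) ((f : L2) x) * (g : L2) x) * h6c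
  -- F* F = T_{|a|²}
  have hFF : (ContinuousLinearMap.adjoint F).comp F = genToeplitz (star a * a) K K := by
    refine ContinuousLinearMap.ext fun f => ?_
    apply ext_inner_right ℂ
    intro g
    rw [ContinuousLinearMap.comp_apply, ContinuousLinearMap.adjoint_inner_left,
      inner_genToeplitz_left (φ := star a * a) f g, Submodule.coe_inner,
      hFcoe f, hFcoe g, L2_inner_eq, L2_inner_eq]
    refine integral_congr_ae ?_
    filter_upwards [mulCLM_coe a (f : L2), mulCLM_coe a (g : L2),
      mulCLM_coe (star a * a) (f : L2), Linf.mul_coe (star a) a,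
      Linf.star_coe a] with x h1 h2 h3 h4 h5
    rw [h1, h2, h3, h4, h5]
    simp only [map_mul, Complex.conj_conj]
    ring
  -- T_1 = id
  have hone : genToeplitz (1 : Linf) K K = ContinuousLinearMap.id ℂ K := by
    refine ContinuousLinearMap.ext fun f => ?_
    have h1 : mulCLM (1 : Linf) (f : L2) = (f : L2) := by
      apply Lp.ext
      filter_upwards [mulCLM_coe (1 : Linf) (f : L2), Linf.one_coe] with x hx hy
      rw [hx, hy]
      exact one_mul _
    show K.orthogonalProjectionOnto (mulCLM (1 : Linf) (f : L2)) = f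
    rw [h1]
    exact Submodule.orthogonalProjectionOnto_mem_subspace_eq_self f
  -- multiplication is additive in the symbol
  have hmulsub : ∀ (χ₁ χ₂ : Linf) (f : L2),
      mulCLM (χ₁ - χ₂) f = mulCLM χ₁ f - mulCLM χ₂ f := by
    intro χ₁ χ₂ f
    apply Lp.ext
    filter_upwards [mulCLM_coe (χ₁ - χ₂) f, mulCLM_coe χ₁ f, mulCLM_coe χ₂ f,
      Lp.coeFn_sub χ₁ χ₂, Lp.coeFn_sub (mulCLM χ₁ f) (mulCLM χ₂ f)] with x h1 h2 h3 h4 h5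
    rw [h1, h5, Pi.sub_apply, h2, h3, h4, Pi.sub_apply]
    ring
  have hTsub : ∀ f : K, genToeplitz (1 - star a * a) K K f =
      f - (ContinuousLinearMap.adjoint F).comp F f := by
    intro f
    have e1 : genToeplitz (1 - star a * a) K K f =
        genToeplitz (1 : Linf) K K f - genToeplitz (star a * a) K K f := by
      show K.orthogonalProjectionOnto (mulCLM (1 - star a * a) (f : L2)) = _
      rw [hmulsub, map_sub]
      rfl
    rw [e1, hFF]
    congr 1
    rw [hone]
    rfl
  -- the relation for part 3
  have hrel : ∀ f : K, genToeplitz (star a - b) H K (F f) =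
      - genToeplitz (1 - star a * a) K K f := by
    intro f
    have key : mulCLM (star a - b) ((F f : H) : L2) =
        - mulCLM (1 - star a * a) (f : L2) := by
      rw [hFcoe]
      apply Lp.ext
      filter_upwards [mulCLM_coe (star a - b) (mulCLM a (f : L2)),
        mulCLM_coe a (f : L2), mulCLM_coe (1 - star a * a) (f : L2),
        Lp.coeFn_sub (star a) b, Linf.star_coe a,
        Lp.coeFn_sub (1 : Linf) (star a * a), Linf.one_coe, Linf.mul_coe (star a) a,
        Lp.coeFn_neg (mulCLM (1 - star a * a) (f : L2)), hba']
        with x h1 h2 h3 h4 h5 h6 h7 h8 h9 h10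
      rw [h1, h2, h4, Pi.sub_apply, h5, h9, Pi.neg_apply, h3, h6, Pi.sub_apply, h7, h8, h5]
      linear_combination (-(f : L2) x) * h10
    apply Subtype.ext
    show ((K.orthogonalProjectionOnto (mulCLM (star a - b) ((F f : H) : L2)) : K) : L2) = _
    rw [key, map_neg]
    rfl
  refine ⟨part1, ⟨?_, ?_⟩, ?_, ?_⟩
  · rintro ⟨h1, _⟩
    refine ContinuousLinearMap.ext fun f => ?_
    rw [hTsub f, h1]
    show f - f = 0
    exact sub_self f
  · intro h0
    have hid : (ContinuousLinearMap.adjoint F).comp F = ContinuousLinearMap.id ℂ K := by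
      refine ContinuousLinearMap.ext fun f => ?_
      have := hTsub f
      rw [h0] at this
      have h2 : (0 : K) = f - (ContinuousLinearMap.adjoint F).comp F f := this
      have h3 := sub_eq_zero.mp h2.symm
      exact h3.symm
    refine ⟨hid, ?_⟩
    refine ContinuousLinearMap.ext fun h => ?_
    obtain ⟨f, rfl⟩ := genToeplitz_surj haK h
    have hf : ContinuousLinearMap.adjoint F (F f) = f := by
      have := congrArg (fun T => T f) hid
      exact this
    show F (ContinuousLinearMap.adjoint F (F f)) = F f
    rw [hf]
  · intro h0
    refine ContinuousLinearMap.ext fun h => ?_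
    obtain ⟨f, rfl⟩ := genToeplitz_surj haK h
    rw [hrel f, h0]
    show -(0 : K →L[ℂ] K) f = 0
    rw [ContinuousLinearMap.zero_apply, neg_zero]
  · intro h0
    refine ContinuousLinearMap.ext fun f => ?_
    have h1 := hrel f
    rw [h0] at h1
    have h2 : (0 : K) = - genToeplitz (1 - star a * a) K K f := h1
    rw [ContinuousLinearMap.zero_apply]
    exact neg_eq_zero.mp h2.symm
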